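/- Let p(l|k) = ∑_{m=0}^{k} ∑_{j=0}^{min(l,m)} C(k,m)·η^m·(1−η)^{k−m}·C(l,j)·C(m,j)·((1−η)N_B)^{m+l−2j}/(1+(1−η)N_B)^{m+l+1} for 0 < η < 1 and N_B ≥ 0. Then for every fixed nonnegative integer k, the function l ↦ p(l|k) is a probability distribution on the nonnegative integers with mean ∑_l l·p(l|k) = η·k + (1−η)·N_B. -/

import Mathlib

lemma binomAux (x y : ℝ) (n : ℕ) :
    ∑ j ∈ Finset.range (n+1), (n.choose j : ℝ) * x ^ j * y ^ (n - j) = (x + y) ^ n := by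
  rw [add_pow]
  exact Finset.sum_congr rfl fun j _ => by ring

lemma binomMulAux (x y : ℝ) (n : ℕ) :
    ∑ j ∈ Finset.range (n+1), (j : ℝ) * (n.choose j : ℝ) * x ^ j * y ^ (n - j)
      = n * x * (x + y) ^ (n - 1) := by
  cases n with
  | zero => simp
  | succ n =>
    rw [Finset.sum_range_succ']
    have h : ∀ i : ℕ, ((i:ℝ)+1) * ((n+1).choose (i+1) : ℝ) = ((n:ℝ)+1) * (n.choose i : ℝ) := by
      intro i
      have := Nat.add_one_mul_choose_eq n i
      have h2 : ((n:ℝ)+1) * (n.choose i : ℝ) = ((n+1).choose (i+1) : ℝ) * ((i:ℝ)+1) := by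
        exact_mod_cast this
      linarith [h2]
    have : ∑ i ∈ Finset.range (n+1),
        ((i:ℕ)+1 : ℝ) * ((n+1).choose (i+1) : ℝ) * x ^ (i+1) * y ^ (n + 1 - (i+1))
        = (n+1 : ℝ) * x * ∑ i ∈ Finset.range (n+1), (n.choose i : ℝ) * x ^ i * y ^ (n - i) := by
      rw [Finset.mul_sum]
      refine Finset.sum_congr rfl fun i _ => ?_
      rw [Nat.succ_sub_succ]
      rw [show ((i:ℝ)+1) * ((n+1).choose (i+1) : ℝ) * x ^ (i+1) * y ^ (n-i)
            = (((i:ℝ)+1) * ((n+1).choose (i+1) : ℝ)) * (x ^ (i+1) * y ^ (n-i)) by ring, h i]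
      ring
    push_cast at this ⊢
    rw [this, binomAux]
    simp

lemma geomFact {N : ℝ} (hN : 0 ≤ N) (j : ℕ) :
    HasSum (fun i : ℕ => ((i+j).choose j : ℝ) * (N / (1+N)) ^ i) ((1+N) ^ (j+1)) := by
  have hP : (0:ℝ) < 1 + N := by linarith
  have hx : ‖N / (1+N)‖ < 1 := by
    rw [Real.norm_eq_abs, abs_of_nonneg (div_nonneg hN hP.le), div_lt_one hP]
    linarith
  have h := hasSum_choose_mul_geometric_of_norm_lt_one (𝕜 := ℝ) j hx
  convert h using 2
  · rfl
  have h1 : 1 - N / (1+N) = 1 / (1+N) := by field_simp; ring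
  rw [h1, one_div, one_div, inv_pow, inv_inv]

lemma auxA {N : ℝ} (hN : 0 ≤ N) (m j : ℕ) (hj : j ≤ m) :
    HasSum (fun l : ℕ => (l.choose j : ℝ) * N ^ (m + l - 2*j) / (1+N) ^ (m+l+1))
      (N ^ (m-j) / (1+N) ^ m) := by
  have hP : (0:ℝ) < 1 + N := by linarith
  set f : ℕ → ℝ := fun l => (l.choose j : ℝ) * N ^ (m + l - 2*j) / (1+N) ^ (m+l+1) with hf
  have hshift : HasSum (fun i : ℕ => f (i + j)) (N ^ (m-j) / (1+N) ^ m) := by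
    have h := (geomFact hN j).mul_left (N ^ (m-j) / (1+N) ^ (m+j+1))
    have heq : (fun i : ℕ => N ^ (m-j) / (1+N) ^ (m+j+1) * (((i+j).choose j : ℝ) * (N/(1+N)) ^ i))
        = fun i : ℕ => f (i + j) := by
      funext i
      rw [hf]
      simp only
      rw [show m + (i + j) - 2*j = (m - j) + i by omega,
          show m + (i + j) + 1 = (m + j + 1) + i by omega, pow_add, pow_add, div_pow]
      field_simp
      ring
    rw [heq] at h
    convert h using 1
    · rfl
    rw [show m + j + 1 = m + (j+1) by omega, pow_add]
    field_simp
  have := (hasSum_nat_add_iff (f := f) j).mp hshift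
  have hz : ∑ i ∈ Finset.range j, f i = 0 := by
    apply Finset.sum_eq_zero
    intro i hi
    rw [hf]
    simp only
    rw [Nat.choose_eq_zero_of_lt (Finset.mem_range.mp hi)]
    simp
  rwa [hz, add_zero] at this

lemma geomFact2 {N : ℝ} (hN : 0 ≤ N) (j : ℕ) :
    HasSum (fun i : ℕ => ((i+j).choose (j+1) : ℝ) * (N / (1+N)) ^ i)
      ((N/(1+N)) * (1+N) ^ (j+2)) := by
  have h := (geomFact hN (j+1)).mul_left (N/(1+N))
  have heq : (fun i : ℕ => (N/(1+N)) * (((i+(j+1)).choose (j+1) : ℝ) * (N/(1+N)) ^ i))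
      = fun i : ℕ => ((i+1+j).choose (j+1) : ℝ) * (N/(1+N)) ^ (i+1) := by
    funext i
    rw [show i + 1 + j = i + (j+1) by omega, pow_succ]
    ring
  rw [heq] at h
  have h2 := (hasSum_nat_add_iff (f := fun i : ℕ => ((i+j).choose (j+1) : ℝ) * (N/(1+N)) ^ i) 1).mp h
  simpa [Nat.choose_succ_self] using h2

lemma auxB {N : ℝ} (hN : 0 ≤ N) (m j : ℕ) (hj : j ≤ m) :
    HasSum (fun l : ℕ => (l : ℝ) * ((l.choose j : ℝ) * N ^ (m + l - 2*j) / (1+N) ^ (m+l+1)))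
      ((((j:ℝ)+1) * N + j) * N ^ (m-j) / (1+N) ^ m) := by
  have hP : (0:ℝ) < 1 + N := by linarith
  set f : ℕ → ℝ := fun l => (l : ℝ) * ((l.choose j : ℝ) * N ^ (m + l - 2*j) / (1+N) ^ (m+l+1))
    with hf
  have hshift : HasSum (fun i : ℕ => f (i + j)) ((((j:ℝ)+1) * N + j) * N ^ (m-j) / (1+N) ^ m) := by
    have hcomb : HasSum (fun i : ℕ =>
        (j:ℝ) * (((i+j).choose j : ℝ) * (N/(1+N)) ^ i)
        + ((j:ℝ)+1) * (((i+j).choose (j+1) : ℝ) * (N/(1+N)) ^ i))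
        ((j:ℝ) * (1+N) ^ (j+1) + ((j:ℝ)+1) * ((N/(1+N)) * (1+N) ^ (j+2))) :=
      ((geomFact hN j).mul_left _).add ((geomFact2 hN j).mul_left _)
    have h := hcomb.mul_left (N ^ (m-j) / (1+N) ^ (m+j+1))
    have heq : (fun i : ℕ => N ^ (m-j) / (1+N) ^ (m+j+1) *
        ((j:ℝ) * (((i+j).choose j : ℝ) * (N/(1+N)) ^ i)
          + ((j:ℝ)+1) * (((i+j).choose (j+1) : ℝ) * (N/(1+N)) ^ i)))
        = fun i : ℕ => f (i + j) := by
      funext i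
      rw [hf]
      simp only
      have hid : ((i:ℝ)+j) * ((i+j).choose j : ℝ)
          = (j:ℝ) * ((i+j).choose j : ℝ) + ((j:ℝ)+1) * ((i+j).choose (j+1) : ℝ) := by
        have := Nat.choose_succ_right_eq (i+j) j
        rw [show i + j - j = i by omega] at this
        have h2 : ((i+j).choose (j+1) : ℝ) * ((j:ℝ)+1) = ((i+j).choose j : ℝ) * i := by
          exact_mod_cast this
        linarith [h2]
      rw [show m + (i + j) - 2*j = (m - j) + i by omega,
          show m + (i + j) + 1 = (m + j + 1) + i by omega, pow_add, pow_add, div_pow]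
      field_simp
      push_cast
      linear_combination (-(N ^ (m - j) * N ^ i * (1 + N) ^ (m + j + 1 + i))) * hid
    rw [heq] at h
    convert h using 1
    · rfl
    rw [show m + j + 1 = m + (j+1) by omega, pow_add]
    have : ((j:ℝ) * (1+N) ^ (j+1) + ((j:ℝ)+1) * ((N/(1+N)) * (1+N) ^ (j+2)))
        = ((j:ℝ) + ((j:ℝ)+1)*N) * (1+N) ^ (j+1) := by
      rw [show j+2 = (j+1)+1 by omega, pow_succ]
      field_simp
      ring
    rw [this]
    field_simp
    ring
  have := (hasSum_nat_add_iff (f := f) j).mp hshift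
  have hz : ∑ i ∈ Finset.range j, f i = 0 := by
    apply Finset.sum_eq_zero
    intro i hi
    rw [hf]
    simp only
    rw [Nat.choose_eq_zero_of_lt (Finset.mem_range.mp hi)]
    simp
  rwa [hz, add_zero] at this

lemma innerIdAux (N : ℝ) (m : ℕ) :
    ∑ j ∈ Finset.range (m+1), (m.choose j : ℝ) * ((((j:ℝ)+1)*N + j) * N ^ (m-j))
      = (N + m) * (1+N) ^ m := by
  have hsplit : ∑ j ∈ Finset.range (m+1), (m.choose j : ℝ) * ((((j:ℝ)+1)*N + j) * N ^ (m-j))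
      = N * ∑ j ∈ Finset.range (m+1), (m.choose j : ℝ) * 1 ^ j * N ^ (m-j)
        + (N+1) * ∑ j ∈ Finset.range (m+1), (j:ℝ) * (m.choose j : ℝ) * 1 ^ j * N ^ (m-j) := by
    rw [Finset.mul_sum, Finset.mul_sum, ← Finset.sum_add_distrib]
    exact Finset.sum_congr rfl fun j _ => by ring
  rw [hsplit, binomAux, binomMulAux]
  cases m with
  | zero => simp
  | succ n =>
    simp only [Nat.succ_sub_one]
    push_cast
    rw [pow_succ]
    ring

/-- The photon-number distribution at the output of the thermal noise
channel `E_{η,N_B}` given a photon-number-state input `|k⟩`: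
`p(l|k) = ∑_{m=0}^{k} ∑_{j=0}^{min(l,m)} C(k,m) η^m (1−η)^{k−m} C(l,j) C(m,j)
  ((1−η)N_B)^{m+l−2j} / (1+(1−η)N_B)^{m+l+1}`.
For every fixed `k`, `l ↦ p(l|k)` is a probability distribution on `ℕ` with mean
`η k + (1−η) N_B`. -/
theorem thermal_channel_number_state_output_distribution
    (η NB : ℝ) (hη : 0 < η) (hη1 : η < 1) (hNB : 0 ≤ NB) (k : ℕ)
    (p : ℕ → ℝ)
    (hp : ∀ l, p l = ∑ m ∈ Finset.range (k + 1), ∑ j ∈ Finset.range (min l m + 1),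
        (k.choose m : ℝ) * η ^ m * (1 - η) ^ (k - m) *
        (l.choose j : ℝ) * (m.choose j : ℝ) *
        ((1 - η) * NB) ^ (m + l - 2 * j) / (1 + (1 - η) * NB) ^ (m + l + 1)) :
    (∀ l, 0 ≤ p l) ∧ (∑' l, p l = 1) ∧
    (∑' l : ℕ, (l : ℝ) * p l = η * k + (1 - η) * NB) := by
  set N := (1 - η) * NB with hNdef
  have h1η : (0:ℝ) ≤ 1 - η := by linarith
  have hN : 0 ≤ N := mul_nonneg h1η hNB
  have hP : (0:ℝ) < 1 + N := by linarith
  set a : ℕ → ℝ := fun m => (k.choose m : ℝ) * η ^ m * (1 - η) ^ (k - m) with ha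
  -- nonnegativity
  have hnonneg : ∀ l, 0 ≤ p l := by
    intro l
    rw [hp l]
    refine Finset.sum_nonneg fun m _ => Finset.sum_nonneg fun j _ => div_nonneg ?_ ?_
    · apply_rules [mul_nonneg, pow_nonneg, Nat.cast_nonneg, hη.le, h1η, hN]
    · exact pow_nonneg hP.le _
  -- reshaped formula for p
  have hp' : ∀ l, p l = ∑ m ∈ Finset.range (k+1), ∑ j ∈ Finset.range (m+1),
      a m * (m.choose j : ℝ) *
        ((l.choose j : ℝ) * N ^ (m + l - 2*j) / (1+N) ^ (m+l+1)) := by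
    intro l
    rw [hp l]
    refine Finset.sum_congr rfl fun m hm => ?_
    have hsub : Finset.range (min l m + 1) ⊆ Finset.range (m+1) :=
      Finset.range_subset_range.mpr (by omega)
    calc ∑ j ∈ Finset.range (min l m + 1),
          (k.choose m : ℝ) * η ^ m * (1 - η) ^ (k - m) * (l.choose j : ℝ) * (m.choose j : ℝ) *
            N ^ (m + l - 2 * j) / (1 + N) ^ (m + l + 1)
        = ∑ j ∈ Finset.range (m+1),
          (k.choose m : ℝ) * η ^ m * (1 - η) ^ (k - m) * (l.choose j : ℝ) * (m.choose j : ℝ) *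
            N ^ (m + l - 2 * j) / (1 + N) ^ (m + l + 1) := by
          refine Finset.sum_subset hsub fun j hjt hjs => ?_
          simp only [Finset.mem_range] at hjt hjs
          rw [Nat.choose_eq_zero_of_lt (show l < j by omega)]
          simp
      _ = _ := Finset.sum_congr rfl fun j _ => by simp only [ha]; ring
  -- sum of a
  have hasum : ∑ m ∈ Finset.range (k+1), a m = 1 := by
    have : ∑ m ∈ Finset.range (k+1), a m = (η + (1-η)) ^ k := by
      rw [← binomAux η (1-η) k]
    rw [this]
    norm_num
  -- HasSum of p
  have hps : HasSum p 1 := by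
    have hpfun : p = fun l => ∑ m ∈ Finset.range (k+1), ∑ j ∈ Finset.range (m+1),
        a m * (m.choose j : ℝ) *
          ((l.choose j : ℝ) * N ^ (m + l - 2*j) / (1+N) ^ (m+l+1)) := funext hp'
    have h1 : HasSum p (∑ m ∈ Finset.range (k+1), ∑ j ∈ Finset.range (m+1),
        a m * (m.choose j : ℝ) * (N ^ (m-j) / (1+N) ^ m)) := by
      rw [hpfun]
      exact hasSum_sum fun m hm => hasSum_sum fun j hj =>
        (auxA hN m j (Nat.lt_succ_iff.mp (Finset.mem_range.mp hj))).mul_left _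
    have hval : ∑ m ∈ Finset.range (k+1), ∑ j ∈ Finset.range (m+1),
        a m * (m.choose j : ℝ) * (N ^ (m-j) / (1+N) ^ m) = 1 := by
      have hrow : ∀ m, ∑ j ∈ Finset.range (m+1),
          a m * (m.choose j : ℝ) * (N ^ (m-j) / (1+N) ^ m) = a m := by
        intro m
        have hstep : ∑ j ∈ Finset.range (m+1),
            a m * (m.choose j : ℝ) * (N ^ (m-j) / (1+N) ^ m)
            = (a m / (1+N) ^ m) * ∑ j ∈ Finset.range (m+1),
                (m.choose j : ℝ) * 1 ^ j * N ^ (m-j) := by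
          rw [Finset.mul_sum]
          exact Finset.sum_congr rfl fun j _ => by ring
        rw [hstep, binomAux]
        rw [div_mul_cancel₀ _ (pow_ne_zero _ (ne_of_gt hP))]
      rw [Finset.sum_congr rfl fun m _ => hrow m, hasum]
    rwa [hval] at h1
  -- HasSum of mean
  have hms : HasSum (fun l : ℕ => (l:ℝ) * p l) (η * k + N) := by
    have hfun : (fun l : ℕ => (l:ℝ) * p l) = fun l : ℕ => ∑ m ∈ Finset.range (k+1),
        ∑ j ∈ Finset.range (m+1), a m * (m.choose j : ℝ) *
          ((l:ℝ) * ((l.choose j : ℝ) * N ^ (m + l - 2*j) / (1+N) ^ (m+l+1))) := by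
      funext l
      rw [hp' l, Finset.mul_sum]
      refine Finset.sum_congr rfl fun m _ => ?_
      rw [Finset.mul_sum]
      exact Finset.sum_congr rfl fun j _ => by ring
    have h1 : HasSum (fun l : ℕ => (l:ℝ) * p l) (∑ m ∈ Finset.range (k+1),
        ∑ j ∈ Finset.range (m+1), a m * (m.choose j : ℝ) *
          ((((j:ℝ)+1) * N + j) * N ^ (m-j) / (1+N) ^ m)) := by
      rw [hfun]
      exact hasSum_sum fun m hm => hasSum_sum fun j hj =>
        (auxB hN m j (Nat.lt_succ_iff.mp (Finset.mem_range.mp hj))).mul_left _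
    have hrow : ∀ m, ∑ j ∈ Finset.range (m+1), a m * (m.choose j : ℝ) *
        ((((j:ℝ)+1) * N + j) * N ^ (m-j) / (1+N) ^ m) = a m * (N + m) := by
      intro m
      have hstep : ∑ j ∈ Finset.range (m+1), a m * (m.choose j : ℝ) *
          ((((j:ℝ)+1) * N + j) * N ^ (m-j) / (1+N) ^ m)
          = (a m / (1+N) ^ m) * ∑ j ∈ Finset.range (m+1),
              (m.choose j : ℝ) * ((((j:ℝ)+1)*N + j) * N ^ (m-j)) := by
        rw [Finset.mul_sum]
        exact Finset.sum_congr rfl fun j _ => by ring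
      rw [hstep, innerIdAux]
      field_simp
    have hval : ∑ m ∈ Finset.range (k+1), ∑ j ∈ Finset.range (m+1),
        a m * (m.choose j : ℝ) * ((((j:ℝ)+1) * N + j) * N ^ (m-j) / (1+N) ^ m)
        = η * k + N := by
      rw [Finset.sum_congr rfl fun m _ => hrow m]
      have hsplit : ∑ m ∈ Finset.range (k+1), a m * (N + m)
          = N * ∑ m ∈ Finset.range (k+1), a m
            + ∑ m ∈ Finset.range (k+1), (m:ℝ) * (k.choose m : ℝ) * η ^ m * (1-η) ^ (k-m) := by
        rw [Finset.mul_sum, ← Finset.sum_add_distrib]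
        exact Finset.sum_congr rfl fun m _ => by simp only [ha]; ring
      rw [hsplit, hasum, binomMulAux]
      have : (η + (1 - η)) = 1 := by ring
      rw [this]
      simp
      ring
    rwa [hval] at h1
  exact ⟨hnonneg, hps.tsum_eq, hms.tsum_eq⟩
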